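/- Let f and g be real polynomials in two variables, not both constant, let d = max(deg f, deg g) ≥ 1, and let f_d and g_d be the homogeneous components of degree d of f and g respectively (so that f_d and g_d are not both identically zero). Then there exists θ₀ ∈ [0, 2π] such that f_d(cos θ₀, sin θ₀)² + g_d(cos θ₀, sin θ₀)² ≠ 0, and for every such θ₀ one has f(r cos θ₀, r sin θ₀)² + g(r cos θ₀, r sin θ₀)² → +∞ as r → +∞. -/

import Mathlib

open MvPolynomial Filter Real

private lemma eval_mul_smul' {n : ℕ} {p : MvPolynomial (Fin 2) ℝ} (h : p.IsHomogeneous n)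
    (c : ℝ) (x : Fin 2 → ℝ) : eval (fun i => c * x i) p = c ^ n * eval x p := by
  rw [eval_eq, eval_eq, Finset.mul_sum]
  refine Finset.sum_congr rfl fun d hd => ?_
  rw [mem_support_iff] at hd
  have hdeg : d.degree = n := by
    by_contra hne
    exact hd (h.coeff_eq_zero hne)
  have hsum : ∑ i ∈ d.support, d i = n := hdeg
  calc coeff d p * ∏ i ∈ d.support, (c * x i) ^ d i
      = coeff d p * ((∏ i ∈ d.support, c ^ d i) * ∏ i ∈ d.support, x i ^ d i) := by
        rw [← Finset.prod_mul_distrib]; simp [mul_pow]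
    _ = c ^ n * (coeff d p * ∏ i ∈ d.support, x i ^ d i) := by
        rw [Finset.prod_pow_eq_pow_sum, hsum]; ring

private lemma hcomp_ne_zero' {p : MvPolynomial (Fin 2) ℝ} (hp : p ≠ 0) :
    homogeneousComponent p.totalDegree p ≠ 0 := by
  have hne : p.support.Nonempty := support_nonempty.2 hp
  obtain ⟨d, hd, hdeg⟩ := Finset.exists_mem_eq_sup _ hne (fun s => s.sum fun _ e => e)
  have hcoeff : coeff d (homogeneousComponent p.totalDegree p) = coeff d p := by
    rw [coeff_homogeneousComponent, if_pos]
    · rw [totalDegree, hdeg]; rfl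
  intro h0
  rw [h0, coeff_zero] at hcoeff
  exact (mem_support_iff.1 hd) hcoeff.symm

private lemma eval_poly_eq' (f : MvPolynomial (Fin 2) ℝ) (d : ℕ) (hfd : f.totalDegree ≤ d)
    (x : Fin 2 → ℝ) (r : ℝ) :
    Polynomial.eval r (∑ k ∈ Finset.range (d + 1),
        Polynomial.C (eval x (homogeneousComponent k f)) * Polynomial.X ^ k) =
      eval (fun i => r * x i) f := by
  have hf' : eval (fun i => r * x i) f
      = ∑ k ∈ Finset.range (d + 1), eval (fun i => r * x i) (homogeneousComponent k f) := by
    conv_lhs => rw [← f.sum_homogeneousComponent]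
    rw [map_sum]
    refine Finset.sum_subset (Finset.range_subset_range.2 (Nat.succ_le_succ hfd)) ?_
    intro k _ hk2
    rw [Finset.mem_range, not_lt] at hk2
    rw [homogeneousComponent_eq_zero _ _ (by omega)]
    simp
  rw [hf', Polynomial.eval_finset_sum]
  refine Finset.sum_congr rfl fun k _ => ?_
  rw [eval_mul_smul' (homogeneousComponent_isHomogeneous k f) r x,
    Polynomial.eval_mul, Polynomial.eval_C, Polynomial.eval_pow, Polynomial.eval_X]
  ring

private lemma coeff_poly_d' (f : MvPolynomial (Fin 2) ℝ) (d : ℕ) (x : Fin 2 → ℝ) :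
    (∑ k ∈ Finset.range (d + 1),
        Polynomial.C (eval x (homogeneousComponent k f)) * Polynomial.X ^ k).coeff d =
      eval x (homogeneousComponent d f) := by
  rw [Polynomial.finset_sum_coeff]
  rw [Finset.sum_eq_single d]
  · simp
  · intro k _ hk
    simp [Polynomial.coeff_C_mul, Polynomial.coeff_X_pow, Ne.symm hk]
  · intro h
    exact absurd (Finset.mem_range.2 (by omega)) h

private lemma natDegree_poly_le' (f : MvPolynomial (Fin 2) ℝ) (d : ℕ) (x : Fin 2 → ℝ) :
    (∑ k ∈ Finset.range (d + 1),
        Polynomial.C (eval x (homogeneousComponent k f)) * Polynomial.X ^ k).natDegree ≤ d := by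
  refine Polynomial.natDegree_sum_le_of_forall_le _ _ fun k hk => ?_
  refine le_trans (Polynomial.natDegree_C_mul_le _ _) ?_
  rw [Polynomial.natDegree_X_pow]
  exact Nat.lt_succ_iff.1 (Finset.mem_range.1 hk)

/-- Let `f, g` be real polynomials in two variables, not both constant, let
`d = max (deg f) (deg g) ≥ 1` and let `f_d`, `g_d` be the homogeneous components of degree `d`.
Then there is `θ₀ ∈ [0, 2π]` with `f_d(cos θ₀, sin θ₀)² + g_d(cos θ₀, sin θ₀)² ≠ 0`, and for
every such `θ₀` the quantity `f(r cos θ₀, r sin θ₀)² + g(r cos θ₀, r sin θ₀)²` tends to `+∞`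
as `r → +∞`. -/
theorem exists_direction_criterion_tendsto_atTop (f g : MvPolynomial (Fin 2) ℝ) (d : ℕ)
    (hconst : ¬ (f.totalDegree = 0 ∧ g.totalDegree = 0))
    (hd : d = max f.totalDegree g.totalDegree) (hd1 : 1 ≤ d) :
    (∃ θ₀ ∈ Set.Icc (0 : ℝ) (2 * π),
      (eval ![Real.cos θ₀, Real.sin θ₀] (homogeneousComponent d f)) ^ 2 +
        (eval ![Real.cos θ₀, Real.sin θ₀] (homogeneousComponent d g)) ^ 2 ≠ 0) ∧
    ∀ θ₀ ∈ Set.Icc (0 : ℝ) (2 * π),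
      (eval ![Real.cos θ₀, Real.sin θ₀] (homogeneousComponent d f)) ^ 2 +
        (eval ![Real.cos θ₀, Real.sin θ₀] (homogeneousComponent d g)) ^ 2 ≠ 0 →
      Tendsto (fun r : ℝ =>
          (eval ![r * Real.cos θ₀, r * Real.sin θ₀] f) ^ 2 +
            (eval ![r * Real.cos θ₀, r * Real.sin θ₀] g) ^ 2)
        atTop atTop := by
  constructor
  · -- existence of θ₀
    -- pick the polynomial achieving the max degree
    have key : ∃ p : MvPolynomial (Fin 2) ℝ,
        (homogeneousComponent d p ≠ 0) ∧
        (homogeneousComponent d p = homogeneousComponent d f ∨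
          homogeneousComponent d p = homogeneousComponent d g) := by
      rcases max_cases f.totalDegree g.totalDegree with ⟨h1, _⟩ | ⟨h1, _⟩
      · refine ⟨f, ?_, Or.inl rfl⟩
        have hf0 : f ≠ 0 := by
          intro h
          rw [hd, h1, h, totalDegree_zero] at hd1
          exact absurd hd1 (by norm_num)
        rw [hd, h1]; exact hcomp_ne_zero' hf0
      · refine ⟨g, ?_, Or.inr rfl⟩
        have hg0 : g ≠ 0 := by
          intro h
          rw [hd, h1, h, totalDegree_zero] at hd1
          exact absurd hd1 (by norm_num)
        rw [hd, h1]; exact hcomp_ne_zero' hg0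
    obtain ⟨p, hp0, hpor⟩ := key
    have hhom : (homogeneousComponent d p).IsHomogeneous d :=
      homogeneousComponent_isHomogeneous d p
    obtain ⟨x, hx⟩ : ∃ x : Fin 2 → ℝ, eval x (homogeneousComponent d p) ≠ 0 := by
      by_contra hall
      push_neg at hall
      exact hp0 (hhom.eq_zero_of_forall_eval_eq_zero hall)
    set z : ℂ := ⟨x 0, x 1⟩ with hz
    have hz0 : z ≠ 0 := by
      intro h
      have h0 : x 0 = 0 := congrArg Complex.re h
      have h1 : x 1 = 0 := congrArg Complex.im h
      have hx0 : x = fun i => (0 : ℝ) * x i := by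
        funext i; fin_cases i <;> simp [h0, h1]
      rw [hx0, eval_mul_smul' hhom 0 x, zero_pow (by omega), zero_mul] at hx
      exact hx rfl
    have habs : (0 : ℝ) < ‖z‖ := by
      simpa using norm_pos_iff.2 hz0
    obtain ⟨θ₀, hmem, hcos, hsin⟩ :
        ∃ θ₀ ∈ Set.Icc (0 : ℝ) (2 * π), Real.cos θ₀ = z.re / ‖z‖ ∧
          Real.sin θ₀ = z.im / ‖z‖ := by
      have hpi := Real.pi_pos
      have harg1 := Complex.neg_pi_lt_arg z
      have harg2 := Complex.arg_le_pi z
      by_cases h : 0 ≤ Complex.arg z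
      · exact ⟨Complex.arg z, ⟨h, by nlinarith⟩, Complex.cos_arg hz0, Complex.sin_arg z⟩
      · push_neg at h
        refine ⟨Complex.arg z + 2 * π, ⟨by nlinarith, by nlinarith⟩, ?_, ?_⟩
        · rw [Real.cos_add_two_pi]; exact Complex.cos_arg hz0
        · rw [Real.sin_add_two_pi]; exact Complex.sin_arg z
    refine ⟨θ₀, hmem, ?_⟩
    have hre : z.re = x 0 := rfl
    have him : z.im = x 1 := rfl
    · have hvec : ![Real.cos θ₀, Real.sin θ₀] = fun i => (‖z‖)⁻¹ * x i := by
        funext i; fin_cases i <;>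
          simp [hcos, hsin, hre, him, div_eq_inv_mul]
      have heval : eval ![Real.cos θ₀, Real.sin θ₀] (homogeneousComponent d p) =
          ((‖z‖)⁻¹) ^ d * eval x (homogeneousComponent d p) := by
        rw [hvec, eval_mul_smul' hhom]
      have hne : eval ![Real.cos θ₀, Real.sin θ₀] (homogeneousComponent d p) ≠ 0 := by
        rw [heval]
        exact mul_ne_zero (pow_ne_zero _ (inv_ne_zero habs.ne')) hx
      rcases hpor with h | h <;> rw [h] at hne <;>
        intro hsum <;> apply hne
      · nlinarith [sq_nonneg (eval ![Real.cos θ₀, Real.sin θ₀] (homogeneousComponent d f)),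
          sq_nonneg (eval ![Real.cos θ₀, Real.sin θ₀] (homogeneousComponent d g)),
          sq_abs (eval ![Real.cos θ₀, Real.sin θ₀] (homogeneousComponent d f))]
      · nlinarith [sq_nonneg (eval ![Real.cos θ₀, Real.sin θ₀] (homogeneousComponent d f)),
          sq_nonneg (eval ![Real.cos θ₀, Real.sin θ₀] (homogeneousComponent d g)),
          sq_abs (eval ![Real.cos θ₀, Real.sin θ₀] (homogeneousComponent d g))]
  · -- the tendsto statement
    intro θ₀ _ hne
    set x : Fin 2 → ℝ := ![Real.cos θ₀, Real.sin θ₀] with hxdef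
    set P : Polynomial ℝ := ∑ k ∈ Finset.range (d + 1),
        Polynomial.C (eval x (homogeneousComponent k f)) * Polynomial.X ^ k with hP
    set Q : Polynomial ℝ := ∑ k ∈ Finset.range (d + 1),
        Polynomial.C (eval x (homogeneousComponent k g)) * Polynomial.X ^ k with hQ
    have hfd : f.totalDegree ≤ d := hd ▸ le_max_left _ _
    have hgd : g.totalDegree ≤ d := hd ▸ le_max_right _ _
    have hPd : P.natDegree ≤ d := natDegree_poly_le' f d x
    have hQd : Q.natDegree ≤ d := natDegree_poly_le' g d x
    have hPc : P.coeff d = eval x (homogeneousComponent d f) := coeff_poly_d' f d x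
    have hQc : Q.coeff d = eval x (homogeneousComponent d g) := coeff_poly_d' g d x
    set R : Polynomial ℝ := P ^ 2 + Q ^ 2 with hR
    have hRcoeff : R.coeff (2 * d) = P.coeff d ^ 2 + Q.coeff d ^ 2 := by
      rw [hR, Polynomial.coeff_add, Polynomial.coeff_pow_of_natDegree_le hPd,
        Polynomial.coeff_pow_of_natDegree_le hQd]
    have hRne : R.coeff (2 * d) ≠ 0 := by
      rw [hRcoeff, hPc, hQc]; exact hne
    have hRdegle : R.natDegree ≤ 2 * d := by
      refine le_trans (Polynomial.natDegree_add_le _ _) ?_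
      simp only [max_le_iff]
      constructor <;> rw [Polynomial.natDegree_pow] <;> omega
    have hRdeg : R.natDegree = 2 * d :=
      le_antisymm hRdegle (Polynomial.le_natDegree_of_ne_zero hRne)
    have hR0 : R ≠ 0 := fun h => hRne (by simp [h])
    have hdegpos : 0 < R.degree := by
      rw [Polynomial.degree_eq_natDegree hR0, hRdeg]
      exact_mod_cast by omega
    have hlead : 0 ≤ R.leadingCoeff := by
      rw [Polynomial.leadingCoeff, hRdeg, hRcoeff]
      positivity
    have htend := Polynomial.tendsto_atTop_of_leadingCoeff_nonneg R hdegpos hlead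
    refine htend.congr fun r => ?_
    have hvec : ![r * Real.cos θ₀, r * Real.sin θ₀] = fun i => r * x i := by
      funext i; fin_cases i <;> simp [hxdef]
    rw [hR, Polynomial.eval_add, Polynomial.eval_pow, Polynomial.eval_pow,
      eval_poly_eq' f d hfd x r, eval_poly_eq' g d hgd x r, hvec]
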